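/- Let γ > 0, σ > 0 and μ, a ∈ ℝ, and set μ_A = μ − √3·σ²/γ and μ_B = μ + √3·σ²/γ. Then ∫_ℝ (1 + √3·|w−a|/γ) · exp(−√3·|w−a|/γ) · φ_{μ,σ}(w) dw = exp((3σ² + 2√3·γ(a−μ))/(2γ²)) · ((1 − √3·a/γ + √3·μ_A/γ) · Φ((μ_A − a)/σ) + (√3/γ) · (σ/√(2π)) · exp(−(a−μ_A)²/(2σ²))) + exp((3σ² − 2√3·γ(a−μ))/(2γ²)) · ((1 + √3·a/γ − √3·μ_B/γ) · Φ((a − μ_B)/σ) + (√3/γ) · (σ/√(2π)) · exp(−(a−μ_B)²/(2σ²))). -/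

import Mathlib

open MeasureTheory Real

/-- Standard normal cumulative distribution function. -/
noncomputable def Phi (t : ℝ) : ℝ :=
  ∫ u in Set.Iic t, (Real.sqrt (2 * Real.pi))⁻¹ * Real.exp (-u ^ 2 / 2)

/-- Normal density with mean μ and standard deviation σ. -/
noncomputable def normalPDF (μ σ x : ℝ) : ℝ :=
  (σ * Real.sqrt (2 * Real.pi))⁻¹ * Real.exp (-(x - μ) ^ 2 / (2 * σ ^ 2))

section Aux

open Filter Set

lemma normalPDF_neg (m σ x : ℝ) : normalPDF m σ (-x) = normalPDF (-m) σ x := by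
  simp only [normalPDF]
  ring_nf

lemma normalPDF_eq (m σ x : ℝ) :
    normalPDF m σ x = (σ * Real.sqrt (2 * Real.pi))⁻¹ *
      Real.exp (-(1 / (2 * σ ^ 2)) * (x - m) ^ 2) := by
  simp only [normalPDF]; ring_nf

lemma integrable_normalPDF {σ : ℝ} (hσ : 0 < σ) (m : ℝ) : Integrable (normalPDF m σ) := by
  simp only [funext (normalPDF_eq m σ)]
  exact (((integrable_exp_neg_mul_sq (by positivity : (0:ℝ) < 1 / (2 * σ ^ 2))).comp_sub_right
    m)).const_mul _

lemma integrable_mul_normalPDF {σ : ℝ} (hσ : 0 < σ) (m : ℝ) :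
    Integrable (fun x => (x - m) * normalPDF m σ x) := by
  have h := ((integrable_mul_exp_neg_mul_sq
    (by positivity : (0:ℝ) < 1 / (2 * σ ^ 2))).comp_sub_right m).const_mul
    ((σ * Real.sqrt (2 * Real.pi))⁻¹)
  refine h.congr (Eventually.of_forall fun x => ?_)
  simp only [normalPDF_eq]
  ring

lemma image_affine_Iic {σ : ℝ} (hσ : 0 < σ) (m c : ℝ) :
    (fun u => σ * u + m) '' Set.Iic c = Set.Iic (σ * c + m) := by
  ext x
  constructor
  · rintro ⟨y, hy, rfl⟩
    simp only [mem_Iic] at *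
    nlinarith
  · intro hx
    refine ⟨(x - m) / σ, ?_, by field_simp; ring⟩
    simp only [mem_Iic] at *
    rw [div_le_iff₀ hσ]
    nlinarith

lemma integral_Iic_normalPDF {σ : ℝ} (hσ : 0 < σ) (m t : ℝ) :
    ∫ w in Set.Iic t, normalPDF m σ w = Phi ((t - m) / σ) := by
  have himg : (fun u => σ * u + m) '' Set.Iic ((t - m) / σ) = Set.Iic t := by
    rw [image_affine_Iic hσ]
    field_simp
    rw [sub_add_cancel]
  have h := integral_image_eq_integral_abs_deriv_smul (f := fun u => σ * u + m) (f' := fun _ => σ)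
    (measurableSet_Iic (a := (t - m) / σ))
    (fun x _ => by
      simpa using (((hasDerivAt_id x).const_mul σ).add_const m).hasDerivWithinAt)
    (fun x _ y _ hxy => by
      have : σ * x = σ * y := by have hxy' : σ * x + m = σ * y + m := hxy; linarith [hxy']
      exact mul_left_cancel₀ hσ.ne' this)
    (normalPDF m σ)
  rw [himg] at h
  rw [h, Phi]
  refine setIntegral_congr_fun measurableSet_Iic fun u _ => ?_
  simp only [normalPDF, smul_eq_mul, abs_of_pos hσ, add_sub_cancel_right]
  rw [mul_pow]
  have h2 : σ ^ 2 * u ^ 2 / (2 * σ ^ 2) = u ^ 2 / 2 := by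
    field_simp
  rw [mul_inv, neg_div, h2]
  field_simp

lemma hasDerivAt_neg_sq_normalPDF {σ : ℝ} (hσ : 0 < σ) (m w : ℝ) :
    HasDerivAt (fun w => -σ ^ 2 * normalPDF m σ w) ((w - m) * normalPDF m σ w) w := by
  have h0 : HasDerivAt (fun w : ℝ => w - m) 1 w := (hasDerivAt_id w).sub_const m
  have h1 : HasDerivAt (fun w : ℝ => (w - m) ^ 2) (2 * (w - m)) w := by
    simpa using h0.fun_pow 2
  have h2 : HasDerivAt (fun w : ℝ => -(w - m) ^ 2 / (2 * σ ^ 2))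
      (-(2 * (w - m)) / (2 * σ ^ 2)) w := h1.neg.div_const _
  have h3 := h2.exp
  have h4 := h3.const_mul (-σ ^ 2 * (σ * Real.sqrt (2 * Real.pi))⁻¹)
  have hfun : (fun w => -σ ^ 2 * normalPDF m σ w)
      = fun y => -σ ^ 2 * (σ * Real.sqrt (2 * Real.pi))⁻¹ *
        Real.exp (-(y - m) ^ 2 / (2 * σ ^ 2)) := by
    funext y; simp only [normalPDF]; ring
  rw [hfun]
  refine h4.congr_deriv ?_
  simp only [normalPDF]
  have h2π : Real.sqrt (2 * Real.pi) ≠ 0 := by positivity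
  field_simp

lemma tendsto_normalPDF_atBot {σ : ℝ} (hσ : 0 < σ) (m : ℝ) :
    Tendsto (fun w => -σ ^ 2 * normalPDF m σ w) atBot (nhds 0) := by
  have h1 : Tendsto (fun w : ℝ => w - m) atBot atBot :=
    tendsto_atBot_add_const_right _ (-m) tendsto_id
  have h2 : Tendsto (fun w : ℝ => (w - m) ^ 2) atBot atTop := by
    have := h1.atBot_mul_atBot₀ h1
    refine this.congr fun w => ?_
    ring
  have h3 : Tendsto (fun w : ℝ => -(w - m) ^ 2 / (2 * σ ^ 2)) atBot atBot := by
    have := tendsto_neg_atTop_atBot.comp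
      (h2.atTop_div_const (by positivity : (0:ℝ) < 2 * σ ^ 2))
    refine this.congr fun w => ?_
    simp only [Function.comp]
    ring
  have h4 := Real.tendsto_exp_atBot.comp h3
  have h5 := h4.const_mul (-σ ^ 2 * (σ * Real.sqrt (2 * Real.pi))⁻¹)
  rw [mul_zero] at h5
  refine h5.congr fun w => ?_
  simp only [normalPDF, Function.comp]
  ring

lemma integral_Iic_mul_normalPDF {σ : ℝ} (hσ : 0 < σ) (m t : ℝ) :
    ∫ w in Set.Iic t, (w - m) * normalPDF m σ w = -σ ^ 2 * normalPDF m σ t := by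
  have := integral_Iic_of_hasDerivAt_of_tendsto' (a := t)
    (fun x _ => hasDerivAt_neg_sq_normalPDF hσ m x)
    ((integrable_mul_normalPDF hσ m).integrableOn)
    (tendsto_normalPDF_atBot hσ m)
  simpa using this

lemma integral_Ioi_normalPDF {σ : ℝ} (hσ : 0 < σ) (m t : ℝ) :
    ∫ w in Set.Ioi t, normalPDF m σ w = Phi ((m - t) / σ) := by
  have h : ∫ w in Set.Ioi t, normalPDF m σ w
      = ∫ w in Set.Ioi t, (fun x => normalPDF (-m) σ x) (-w) := by
    refine setIntegral_congr_fun measurableSet_Ioi fun w _ => ?_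
    show normalPDF m σ w = normalPDF (-m) σ (-w)
    rw [← normalPDF_neg, neg_neg]
  have h2 := integral_comp_neg_Ioi t (fun x => normalPDF (-m) σ x)
  rw [h, h2, integral_Iic_normalPDF hσ]
  congr 1
  ring

lemma integral_Ioi_mul_normalPDF {σ : ℝ} (hσ : 0 < σ) (m t : ℝ) :
    ∫ w in Set.Ioi t, (w - m) * normalPDF m σ w = σ ^ 2 * normalPDF m σ t := by
  have h : ∫ w in Set.Ioi t, (w - m) * normalPDF m σ w
      = ∫ w in Set.Ioi t, (fun x => -((x - -m) * normalPDF (-m) σ x)) (-w) := by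
    refine setIntegral_congr_fun measurableSet_Ioi fun w _ => ?_
    show (w - m) * normalPDF m σ w = -((-w - -m) * normalPDF (-m) σ (-w))
    rw [← normalPDF_neg, neg_neg]
    ring
  have h2 := integral_comp_neg_Ioi t (fun x => -((x - -m) * normalPDF (-m) σ x))
  rw [h, h2, integral_neg, integral_Iic_mul_normalPDF hσ,
    ← neg_neg t, normalPDF_neg]
  ring

lemma pointwise_Iic (γ σ μ a w : ℝ) (hγ : 0 < γ) (hσ : 0 < σ) (hw : w ≤ a) :
    (1 + Real.sqrt 3 * |w - a| / γ) * Real.exp (-(Real.sqrt 3) * |w - a| / γ) *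
        normalPDF μ σ w
      = Real.exp ((3 * σ ^ 2 - 2 * Real.sqrt 3 * γ * (a - μ)) / (2 * γ ^ 2)) *
        ((1 + Real.sqrt 3 * a / γ - Real.sqrt 3 * (μ + Real.sqrt 3 * σ ^ 2 / γ) / γ) *
            normalPDF (μ + Real.sqrt 3 * σ ^ 2 / γ) σ w
          - Real.sqrt 3 / γ * ((w - (μ + Real.sqrt 3 * σ ^ 2 / γ)) *
            normalPDF (μ + Real.sqrt 3 * σ ^ 2 / γ) σ w)) := by
  have h3 : Real.sqrt 3 * Real.sqrt 3 = 3 := Real.mul_self_sqrt (by norm_num)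
  rw [abs_of_nonpos (by linarith : w - a ≤ 0)]
  simp only [normalPDF]
  set s := Real.sqrt 3 with hs
  have hexp : Real.exp (-s * -(w - a) / γ) * Real.exp (-(w - μ) ^ 2 / (2 * σ ^ 2))
      = Real.exp ((3 * σ ^ 2 - 2 * s * γ * (a - μ)) / (2 * γ ^ 2)) *
        Real.exp (-(w - (μ + s * σ ^ 2 / γ)) ^ 2 / (2 * σ ^ 2)) := by
    rw [← Real.exp_add, ← Real.exp_add]
    congr 1
    rw [show (3 : ℝ) = s * s from h3.symm]
    field_simp
    ring
  linear_combination ((1 + s * (a - w) / γ) * (σ * Real.sqrt (2 * Real.pi))⁻¹) * hexp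

lemma pointwise_Ioi (γ σ μ a w : ℝ) (hγ : 0 < γ) (hσ : 0 < σ) (hw : a ≤ w) :
    (1 + Real.sqrt 3 * |w - a| / γ) * Real.exp (-(Real.sqrt 3) * |w - a| / γ) *
        normalPDF μ σ w
      = Real.exp ((3 * σ ^ 2 + 2 * Real.sqrt 3 * γ * (a - μ)) / (2 * γ ^ 2)) *
        ((1 - Real.sqrt 3 * a / γ + Real.sqrt 3 * (μ - Real.sqrt 3 * σ ^ 2 / γ) / γ) *
            normalPDF (μ - Real.sqrt 3 * σ ^ 2 / γ) σ w
          + Real.sqrt 3 / γ * ((w - (μ - Real.sqrt 3 * σ ^ 2 / γ)) *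
            normalPDF (μ - Real.sqrt 3 * σ ^ 2 / γ) σ w)) := by
  have h3 : Real.sqrt 3 * Real.sqrt 3 = 3 := Real.mul_self_sqrt (by norm_num)
  rw [abs_of_nonneg (by linarith : 0 ≤ w - a)]
  simp only [normalPDF]
  set s := Real.sqrt 3 with hs
  have hexp : Real.exp (-s * (w - a) / γ) * Real.exp (-(w - μ) ^ 2 / (2 * σ ^ 2))
      = Real.exp ((3 * σ ^ 2 + 2 * s * γ * (a - μ)) / (2 * γ ^ 2)) *
        Real.exp (-(w - (μ - s * σ ^ 2 / γ)) ^ 2 / (2 * σ ^ 2)) := by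
    rw [← Real.exp_add, ← Real.exp_add]
    congr 1
    rw [show (3 : ℝ) = s * s from h3.symm]
    field_simp
    ring
  linear_combination ((1 + s * (w - a) / γ) * (σ * Real.sqrt (2 * Real.pi))⁻¹) * hexp

end Aux

theorem integral_matern15_mul_normalPDF (γ σ μ a μA μB : ℝ)
    (hγ : 0 < γ) (hσ : 0 < σ)
    (hμA : μA = μ - Real.sqrt 3 * σ ^ 2 / γ) (hμB : μB = μ + Real.sqrt 3 * σ ^ 2 / γ) :
    ∫ w : ℝ, (1 + Real.sqrt 3 * |w - a| / γ) * Real.exp (-(Real.sqrt 3) * |w - a| / γ) *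
        normalPDF μ σ w =
      Real.exp ((3 * σ ^ 2 + 2 * Real.sqrt 3 * γ * (a - μ)) / (2 * γ ^ 2)) *
        ((1 - Real.sqrt 3 * a / γ + Real.sqrt 3 * μA / γ) * Phi ((μA - a) / σ) +
          Real.sqrt 3 / γ * (σ / Real.sqrt (2 * Real.pi)) *
            Real.exp (-(a - μA) ^ 2 / (2 * σ ^ 2))) +
      Real.exp ((3 * σ ^ 2 - 2 * Real.sqrt 3 * γ * (a - μ)) / (2 * γ ^ 2)) *
        ((1 + Real.sqrt 3 * a / γ - Real.sqrt 3 * μB / γ) * Phi ((a - μB) / σ) +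
          Real.sqrt 3 / γ * (σ / Real.sqrt (2 * Real.pi)) *
            Real.exp (-(a - μB) ^ 2 / (2 * σ ^ 2))) := by
  subst hμA hμB
  set s := Real.sqrt 3 with hs
  set μA := μ - s * σ ^ 2 / γ with hμA
  set μB := μ + s * σ ^ 2 / γ with hμB
  set KA := Real.exp ((3 * σ ^ 2 + 2 * s * γ * (a - μ)) / (2 * γ ^ 2)) with hKA
  set KB := Real.exp ((3 * σ ^ 2 - 2 * s * γ * (a - μ)) / (2 * γ ^ 2)) with hKB
  set cA := 1 - s * a / γ + s * μA / γ with hcA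
  set cB := 1 + s * a / γ - s * μB / γ with hcB
  set F := fun w => (1 + s * |w - a| / γ) * Real.exp (-s * |w - a| / γ) * normalPDF μ σ w
    with hF
  -- Integrable replacement functions on each half line
  set gB := fun w => KB * (cB * normalPDF μB σ w - s / γ * ((w - μB) * normalPDF μB σ w))
    with hgB
  set gA := fun w => KA * (cA * normalPDF μA σ w + s / γ * ((w - μA) * normalPDF μA σ w))
    with hgA
  have hgBint : Integrable gB :=
    (((integrable_normalPDF hσ μB).const_mul cB).sub
      ((integrable_mul_normalPDF hσ μB).const_mul (s / γ))).const_mul KB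
  have hgAint : Integrable gA :=
    (((integrable_normalPDF hσ μA).const_mul cA).add
      ((integrable_mul_normalPDF hσ μA).const_mul (s / γ))).const_mul KA
  have hEqB : Set.EqOn F gB (Set.Iic a) := fun w hw => by
    have := pointwise_Iic γ σ μ a w hγ hσ hw
    simpa [hF, hgB, hcB, hKB, hμB, hs] using this
  have hEqA : Set.EqOn F gA (Set.Ioi a) := fun w hw => by
    have := pointwise_Ioi γ σ μ a w hγ hσ (le_of_lt hw)
    simpa [hF, hgA, hcA, hKA, hμA, hs] using this
  have hIntB : IntegrableOn F (Set.Iic a) :=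
    (hgBint.integrableOn).congr_fun hEqB.symm measurableSet_Iic
  have hIntA : IntegrableOn F (Set.Ioi a) :=
    (hgAint.integrableOn).congr_fun hEqA.symm measurableSet_Ioi
  have hsplit : ∫ w : ℝ, F w = (∫ w in Set.Iic a, F w) + ∫ w in Set.Ioi a, F w := by
    rw [← setIntegral_univ (f := F), ← Set.Iic_union_Ioi (a := a),
      setIntegral_union (Set.Iic_disjoint_Ioi le_rfl) measurableSet_Ioi hIntB hIntA]
  have hB : ∫ w in Set.Iic a, F w
      = KB * (cB * Phi ((a - μB) / σ) - s / γ * (-σ ^ 2 * normalPDF μB σ a)) := by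
    rw [setIntegral_congr_fun measurableSet_Iic hEqB]
    simp only [hgB]
    rw [integral_const_mul]
    congr 1
    rw [integral_sub (((integrable_normalPDF hσ μB).const_mul cB).integrableOn)
      (((integrable_mul_normalPDF hσ μB).const_mul (s / γ)).integrableOn),
      integral_const_mul, integral_const_mul, integral_Iic_normalPDF hσ,
      integral_Iic_mul_normalPDF hσ]
  have hA : ∫ w in Set.Ioi a, F w
      = KA * (cA * Phi ((μA - a) / σ) + s / γ * (σ ^ 2 * normalPDF μA σ a)) := by
    rw [setIntegral_congr_fun measurableSet_Ioi hEqA]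
    simp only [hgA]
    rw [integral_const_mul]
    congr 1
    rw [integral_add (((integrable_normalPDF hσ μA).const_mul cA).integrableOn)
      (((integrable_mul_normalPDF hσ μA).const_mul (s / γ)).integrableOn),
      integral_const_mul, integral_const_mul, integral_Ioi_normalPDF hσ,
      integral_Ioi_mul_normalPDF hσ]
  rw [hsplit, hB, hA]
  have hπ : Real.sqrt (2 * Real.pi) ≠ 0 := by positivity
  simp only [normalPDF]
  field_simp
  ring
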